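/- Let n ≥ 2 and let u : (0,∞) → ℝ be a positive C² solution of u''/(1+(u')²) − (n−1)/u + (1/2) r u' − (1/2) u = 0. Define α(r) = arctan(u(r)/r). Then at any critical point r₀ of α (i.e. r₀ u'(r₀) = u(r₀)) one has α''(r₀) = r₀ u''(r₀)/(u(r₀)² + r₀²) > 0; in particular every critical point of α is a strict local minimum, and since α is bounded, the limit lim_{r→∞} α(r) exists. -/

import Mathlib

open Real Set Filter


/-- For a positive solution `u` of the self-expander ODE on `(0,∞)`, the angle
function `α(r) = arctan(u(r)/r)` satisfies, at any critical point `r₀`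
(i.e. `r₀ u'(r₀) = u(r₀)`), `α''(r₀) = r₀ u''(r₀)/(u(r₀)² + r₀²) > 0`; so every
critical point of `α` is a strict local minimum, and `α` has a limit at `∞`. -/
theorem stmt_2 (n : ℕ) (hn : 2 ≤ n) (u : ℝ → ℝ)
    (hreg : ContDiffOn ℝ 2 u (Set.Ioi 0))
    (hupos : ∀ r ∈ Set.Ioi (0 : ℝ), 0 < u r)
    (hode : ∀ r ∈ Set.Ioi (0 : ℝ),
      deriv (deriv u) r / (1 + (deriv u r) ^ 2) - ((n : ℝ) - 1) / u r
        + (1 / 2) * r * deriv u r - (1 / 2) * u r = 0) :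
    (∀ r₀ ∈ Set.Ioi (0 : ℝ), r₀ * deriv u r₀ = u r₀ →
      deriv (deriv fun r => Real.arctan (u r / r)) r₀
          = r₀ * deriv (deriv u) r₀ / (u r₀ ^ 2 + r₀ ^ 2) ∧
        0 < deriv (deriv fun r => Real.arctan (u r / r)) r₀) ∧
      ∃ L : ℝ, Filter.Tendsto (fun r => Real.arctan (u r / r)) Filter.atTop (nhds L) := by
  have hvC : ContDiffOn ℝ 1 (deriv u) (Set.Ioi 0) :=
    hreg.deriv_of_isOpen isOpen_Ioi (by norm_num)
  have hudiff : ∀ r ∈ Set.Ioi (0:ℝ), HasDerivAt u (deriv u r) r := fun r hr =>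
    ((hreg.differentiableOn (by norm_num)).differentiableAt (isOpen_Ioi.mem_nhds hr)).hasDerivAt
  have hvdiff : ∀ r ∈ Set.Ioi (0:ℝ), HasDerivAt (deriv u) (deriv (deriv u) r) r := fun r hr =>
    ((hvC.differentiableOn (by norm_num)).differentiableAt (isOpen_Ioi.mem_nhds hr)).hasDerivAt
  set g : ℝ → ℝ := fun r => (r * deriv u r - u r) / ((u r)^2 + r^2) with hgdef
  have hDpos : ∀ r ∈ Set.Ioi (0:ℝ), 0 < (u r)^2 + r^2 := by
    intro r hr
    have hr0 : (0:ℝ) < r := hr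
    positivity
  -- first derivative
  have hga : ∀ r ∈ Set.Ioi (0:ℝ), HasDerivAt (fun r => Real.arctan (u r / r)) (g r) r := by
    intro r hr
    have hr0 : (0:ℝ) < r := hr
    have hrne : r ≠ 0 := ne_of_gt hr0
    have h1 : HasDerivAt (fun r => u r / r) ((deriv u r * r - u r * 1) / r ^ 2) r :=
      (hudiff r hr).div (hasDerivAt_id r) hrne
    have h2 := h1.arctan
    convert h2 using 1
    have hD := hDpos r hr
    simp only [hgdef]
    field_simp
    ring
  -- positivity of u'' at critical points
  have hwpos : ∀ s ∈ Set.Ioi (0:ℝ), s * deriv u s = u s → 0 < deriv (deriv u) s := by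
    intro s hs hcrit
    have hu := hupos s hs
    have h1v : (0:ℝ) < 1 + (deriv u s)^2 := by positivity
    have h := hode s hs
    have hCD : (1/2) * s * deriv u s - (1/2) * u s = 0 := by
      rw [mul_assoc, hcrit]; ring
    have hq : deriv (deriv u) s / (1 + (deriv u s)^2) = ((n:ℝ)-1)/u s := by linarith
    have hn1 : (1:ℝ) ≤ (n:ℝ) - 1 := by
      have : (2:ℝ) ≤ n := by exact_mod_cast hn
      linarith
    have h2 : 0 < ((n:ℝ)-1)/u s := div_pos (by linarith) hu
    rw [← hq] at h2
    have := mul_pos h2 h1v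
    rwa [div_mul_cancel₀ _ (ne_of_gt h1v)] at this
  -- second derivative of g at critical points
  have hg2 : ∀ s ∈ Set.Ioi (0:ℝ), s * deriv u s = u s →
      HasDerivAt g (s * deriv (deriv u) s / ((u s)^2 + s^2)) s := by
    intro s hs hcrit
    have hN : HasDerivAt (fun r => r * deriv u r - u r)
        (1 * deriv u s + s * deriv (deriv u) s - deriv u s) s :=
      ((hasDerivAt_id s).mul (hvdiff s hs)).sub (hudiff s hs)
    have hDen : HasDerivAt (fun r => (u r)^2 + r^2)
        (2 * u s * deriv u s + 2 * s) s := by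
      have hp1 := (hudiff s hs).pow 2
      have hp2 := (hasDerivAt_id s).pow 2
      exact (hp1.add hp2).congr_deriv (by simp)
    have hDne : (u s)^2 + s^2 ≠ 0 := ne_of_gt (hDpos s hs)
    have h := hN.div hDen hDne
    refine h.congr_deriv ?_
    have h0 : s * deriv u s - u s = 0 := sub_eq_zero.mpr hcrit
    field_simp
    linear_combination (-2 * (deriv u s * u s + s)) * h0
  -- part 1
  have part1 : ∀ r₀ ∈ Set.Ioi (0 : ℝ), r₀ * deriv u r₀ = u r₀ →
      deriv (deriv fun r => Real.arctan (u r / r)) r₀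
          = r₀ * deriv (deriv u) r₀ / (u r₀ ^ 2 + r₀ ^ 2) ∧
        0 < deriv (deriv fun r => Real.arctan (u r / r)) r₀ := by
    intro r₀ hr₀ hcrit
    have hev : deriv (fun r => Real.arctan (u r / r)) =ᶠ[nhds r₀] g := by
      filter_upwards [isOpen_Ioi.mem_nhds hr₀] with r hr using (hga r hr).deriv
    have heq : deriv (deriv fun r => Real.arctan (u r / r)) r₀ = deriv g r₀ := hev.deriv_eq
    rw [heq, (hg2 r₀ hr₀ hcrit).deriv]
    refine ⟨rfl, ?_⟩
    have := hwpos r₀ hr₀ hcrit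
    have hr0 : (0:ℝ) < r₀ := hr₀
    have hD := hDpos r₀ hr₀
    positivity
  refine ⟨part1, ?_⟩
  -- continuity of g
  have hgc : ∀ r ∈ Set.Ioi (0:ℝ), ContinuousAt g r := by
    intro r hr
    have h1 : ContinuousAt u r := (hudiff r hr).differentiableAt.continuousAt
    have h2 : ContinuousAt (deriv u) r := (hvdiff r hr).differentiableAt.continuousAt
    have hDne : (u r)^2 + r^2 ≠ 0 := ne_of_gt (hDpos r hr)
    exact ((continuousAt_id.mul h2).sub h1).div ((h1.pow 2).add (continuousAt_id.pow 2)) hDne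
  -- forward invariance of {g ≥ 0}
  have hinv : ∀ r₁ ∈ Set.Ioi (0:ℝ), 0 ≤ g r₁ → ∀ r₂, r₁ ≤ r₂ → 0 ≤ g r₂ := by
    intro r₁ hr₁ hg1 r₂ hle
    by_contra hneg
    push_neg at hneg
    have hr₁r₂ : r₁ < r₂ := lt_of_le_of_ne hle (by rintro rfl; exact absurd hg1 (not_le.mpr hneg))
    set S := Set.Icc r₁ r₂ ∩ g ⁻¹' Set.Ici 0 with hS
    have hSne : S.Nonempty := ⟨r₁, ⟨le_refl _, le_of_lt hr₁r₂⟩, hg1⟩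
    have hSbdd : BddAbove S := ⟨r₂, fun x hx => hx.1.2⟩
    have hclosed : IsClosed S := by
      refine ContinuousOn.preimage_isClosed_of_isClosed ?_ isClosed_Icc isClosed_Ici
      exact fun x hx => (hgc x (lt_of_lt_of_le hr₁ hx.1)).continuousWithinAt
    set s := sSup S with hs
    have hsmem : s ∈ S := hclosed.csSup_mem hSne hSbdd
    have hs0 : (0:ℝ) < s := lt_of_lt_of_le hr₁ hsmem.1.1
    have hsr₂ : s < r₂ := by
      rcases lt_or_eq_of_le hsmem.1.2 with h | h
      · exact h
      · exact absurd (h ▸ hsmem.2) (not_le.mpr hneg)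
    have hgs : (0:ℝ) ≤ g s := hsmem.2
    have hkey : ∀ᶠ r in nhdsWithin s (Set.Ioi s), 0 < g r := by
      rcases lt_or_eq_of_le hgs with hpos | heq
      · have hev : ∀ᶠ r in nhds s, 0 < g r := (hgc s hs0).eventually (eventually_gt_nhds hpos)
        exact hev.filter_mono nhdsWithin_le_nhds
      · have hcrit : s * deriv u s = u s := by
          have hDne : (u s)^2 + s^2 ≠ 0 := ne_of_gt (hDpos s hs0)
          have : (s * deriv u s - u s) / ((u s)^2 + s^2) = 0 := heq.symm
          have := (div_eq_zero_iff.mp this).resolve_right hDne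
          linarith
        have hd := hg2 s hs0 hcrit
        have hc : 0 < s * deriv (deriv u) s / ((u s)^2 + s^2) := by
          have := hwpos s hs0 hcrit
          have hD := hDpos s hs0
          positivity
        rw [hasDerivAt_iff_tendsto_slope] at hd
        have hsl : ∀ᶠ r in nhdsWithin s {s}ᶜ, 0 < slope g s r := hd (Ioi_mem_nhds hc)
        have hmono : nhdsWithin s (Set.Ioi s) ≤ nhdsWithin s {s}ᶜ :=
          nhdsWithin_mono s (fun x hx => ne_of_gt hx)
        filter_upwards [hsl.filter_mono hmono, self_mem_nhdsWithin] with r hslr hrmem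
        have hrs : (0:ℝ) < r - s := sub_pos.mpr hrmem
        rw [slope_def_field] at hslr
        have : 0 < g r - g s := by
          have := mul_pos hslr hrs
          rwa [div_mul_cancel₀ _ (ne_of_gt hrs)] at this
        linarith [heq]
    have hIoo : Set.Ioo s r₂ ∈ nhdsWithin s (Set.Ioi s) :=
      Ioo_mem_nhdsGT_of_mem ⟨le_refl s, hsr₂⟩
    obtain ⟨r, hgr, hrIoo⟩ := (hkey.and (eventually_of_mem hIoo (fun x hx => hx))).exists
    have hrS : r ∈ S := ⟨⟨le_trans hsmem.1.1 (le_of_lt hrIoo.1), le_of_lt hrIoo.2⟩, le_of_lt hgr⟩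
    exact absurd (le_csSup hSbdd hrS) (not_le.mpr hrIoo.1)
  -- limit
  by_cases hcase : ∃ r₁ ∈ Set.Ioi (0:ℝ), 0 ≤ g r₁
  · obtain ⟨r₁, hr₁, hg1⟩ := hcase
    have hmono : MonotoneOn (fun r => Real.arctan (u r / r)) (Set.Ici r₁) := by
      apply monotoneOn_of_deriv_nonneg (convex_Ici r₁)
      · exact fun x hx =>
          ((hga x (Set.mem_Ioi.mpr (lt_of_lt_of_le (Set.mem_Ioi.mp hr₁) (Set.mem_Ici.mp hx)))).differentiableAt.continuousAt).continuousWithinAt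
      · rw [interior_Ici]
        exact fun x hx =>
          (hga x (Set.mem_Ioi.mpr (lt_trans (Set.mem_Ioi.mp hr₁) (Set.mem_Ioi.mp hx)))).differentiableAt.differentiableWithinAt
      · rw [interior_Ici]
        intro x hx
        rw [(hga x (Set.mem_Ioi.mpr (lt_trans (Set.mem_Ioi.mp hr₁) (Set.mem_Ioi.mp hx)))).deriv]
        exact hinv r₁ hr₁ hg1 x (le_of_lt hx)
    set b : ℝ → ℝ := fun r => Real.arctan (u (max r r₁) / (max r r₁)) with hb
    have hbmono : Monotone b := fun x y hxy =>
      hmono (Set.mem_Ici.mpr (le_max_right _ _)) (Set.mem_Ici.mpr (le_max_right _ _)) (max_le_max hxy le_rfl)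
    have hbdd : BddAbove (Set.range b) := by
      refine ⟨Real.pi/2, ?_⟩
      rintro _ ⟨x, rfl⟩
      exact le_of_lt (Real.arctan_lt_pi_div_two _)
    refine ⟨_, (tendsto_atTop_ciSup hbmono hbdd).congr' ?_⟩
    filter_upwards [eventually_ge_atTop r₁] with r hr
    simp only [hb, max_eq_left hr]
  · push_neg at hcase
    have hneg : ∀ r ∈ Set.Ioi (0:ℝ), g r ≤ 0 := fun r hr => le_of_lt (hcase r hr)
    have hanti : AntitoneOn (fun r => Real.arctan (u r / r)) (Set.Ici 1) := by
      apply antitoneOn_of_deriv_nonpos (convex_Ici 1)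
      · exact fun x hx =>
          ((hga x (Set.mem_Ioi.mpr (lt_of_lt_of_le one_pos (Set.mem_Ici.mp hx)))).differentiableAt.continuousAt).continuousWithinAt
      · rw [interior_Ici]
        exact fun x hx =>
          (hga x (Set.mem_Ioi.mpr (lt_trans one_pos (Set.mem_Ioi.mp hx)))).differentiableAt.differentiableWithinAt
      · rw [interior_Ici]
        intro x hx
        rw [(hga x (Set.mem_Ioi.mpr (lt_trans one_pos (Set.mem_Ioi.mp hx)))).deriv]
        exact hneg x (Set.mem_Ioi.mpr (lt_trans one_pos (Set.mem_Ioi.mp hx)))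
    set b : ℝ → ℝ := fun r => Real.arctan (u (max r 1) / (max r 1)) with hb
    have hbanti : Antitone b := fun x y hxy =>
      hanti (Set.mem_Ici.mpr (le_max_right _ _)) (Set.mem_Ici.mpr (le_max_right _ _)) (max_le_max hxy le_rfl)
    have hbdd : BddBelow (Set.range b) := by
      refine ⟨-(Real.pi/2), ?_⟩
      rintro _ ⟨x, rfl⟩
      exact le_of_lt (Real.neg_pi_div_two_lt_arctan _)
    refine ⟨_, (tendsto_atTop_ciInf hbanti hbdd).congr' ?_⟩
    filter_upwards [eventually_ge_atTop (1:ℝ)] with r hr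
    simp only [hb, max_eq_left hr]
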